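/- Let f, g ≥ 1 be integers and m = f + g, and regard M as a complex 4×4 matrix. Then M is diagonalizable over ℂ: there exist an invertible complex 4×4 matrix P and the diagonal matrix D with diagonal entries 1, 1 − m, i·√(m−1), −i·√(m−1) such that M = P·D·P⁻¹. Consequently, for every v₀ ∈ ℂ⁴ there exist vectors x₁, x₂, x₃, x₄ ∈ ℂ⁴ with M·x₁ = x₁, M·x₂ = i·√(m−1)·x₂, M·x₃ = −i·√(m−1)·x₃, M·x₄ = (1 − m)·x₄, v₀ = x₁ + x₂ + x₃ + x₄, and M^ℓ·v₀ = x₁ + (i·√(m−1))^ℓ·x₂ + (−i·√(m−1))^ℓ·x₃ + (1 − m)^ℓ·x₄ for all ℓ ≥ 0. -/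

import Mathlib

/-- The transition matrix of the linearized min-sum message recursions within a
`(2m,0)` symmetric stabilizer, with `f` errors in one block and `g` in the other. -/
def Mmat (K : Type*) [Field K] (f g : K) : Matrix (Fin 4) (Fin 4) K :=
  !![0, -f, g - 1, 0;
     0, -(f - 1), g, 0;
     f - 1, 0, 0, -g;
     f, 0, 0, -(g - 1)]

/-- Over `ℂ`, `M` is diagonalizable with eigenvalues
`1, 1-m, i·√(m-1), -i·√(m-1)` (`m = f + g`); consequently every initial vector `v₀`
decomposes into eigencomponents `x₁ + x₂ + x₃ + x₄` and
`M^ℓ·v₀ = x₁ + (i√(m-1))^ℓ·x₂ + (-i√(m-1))^ℓ·x₃ + (1-m)^ℓ·x₄` for all `ℓ`. -/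
theorem stmt_11 (f g : ℤ) (hf : 1 ≤ f) (hg : 1 ≤ g) :
    let m : ℂ := (f : ℂ) + (g : ℂ)
    let s : ℂ := Complex.I * (Real.sqrt ((f : ℝ) + (g : ℝ) - 1) : ℂ)
    let M := Mmat ℂ (f : ℂ) (g : ℂ)
    let D : Matrix (Fin 4) (Fin 4) ℂ := Matrix.diagonal ![1, 1 - m, s, -s]
    (∃ P : Matrix (Fin 4) (Fin 4) ℂ, IsUnit P ∧ M = P * D * P⁻¹) ∧
    ∀ v₀ : Fin 4 → ℂ, ∃ x₁ x₂ x₃ x₄ : Fin 4 → ℂ,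
      M.mulVec x₁ = x₁ ∧
      M.mulVec x₂ = s • x₂ ∧
      M.mulVec x₃ = (-s) • x₃ ∧
      M.mulVec x₄ = (1 - m) • x₄ ∧
      v₀ = x₁ + x₂ + x₃ + x₄ ∧
      ∀ ℓ : ℕ, (M ^ ℓ).mulVec v₀ =
        x₁ + s ^ ℓ • x₂ + (-s) ^ ℓ • x₃ + (1 - m) ^ ℓ • x₄ := by
  intro m s M D
  have hfC : (f : ℂ) = ((f : ℝ) : ℂ) := by push_cast; ring
  have hgC : (g : ℂ) = ((g : ℝ) : ℂ) := by push_cast; ring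
  have hnn : (0 : ℝ) ≤ (f : ℝ) + (g : ℝ) - 1 := by
    have h1 : (1:ℝ) ≤ (f:ℝ) := by exact_mod_cast hf
    have h2 : (1:ℝ) ≤ (g:ℝ) := by exact_mod_cast hg
    linarith
  have hsq : (Real.sqrt ((f : ℝ) + (g : ℝ) - 1)) ^ 2 = (f : ℝ) + (g : ℝ) - 1 :=
    Real.sq_sqrt hnn
  have hs2 : s ^ 2 = 1 - m := by
    show (Complex.I * _) ^ 2 = 1 - m
    have : ((Real.sqrt ((f : ℝ) + (g : ℝ) - 1) : ℂ)) ^ 2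
        = ((f : ℝ) : ℂ) + ((g : ℝ) : ℂ) - 1 := by
      rw [← Complex.ofReal_pow, hsq]; push_cast; ring
    rw [mul_pow, Complex.I_sq, this, ← hfC, ← hgC]
    show _ = 1 - ((f:ℂ) + (g:ℂ)); ring
  have hs0 : s ≠ 0 := by
    have hpos : (0 : ℝ) < (f : ℝ) + (g : ℝ) - 1 := by
      have h1 : (1:ℝ) ≤ (f:ℝ) := by exact_mod_cast hf
      have h2 : (1:ℝ) ≤ (g:ℝ) := by exact_mod_cast hg
      linarith
    have : Real.sqrt ((f : ℝ) + (g : ℝ) - 1) ≠ 0 :=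
      ne_of_gt (Real.sqrt_pos.mpr hpos)
    exact mul_ne_zero Complex.I_ne_zero (by exact_mod_cast this)
  have hm0 : m ≠ 0 := by
    have : ((f + g : ℤ) : ℂ) ≠ 0 := by
      exact_mod_cast (by omega : f + g ≠ 0)
    show (f:ℂ) + (g:ℂ) ≠ 0
    push_cast at this; exact this
  have hm : m = (f:ℂ) + (g:ℂ) := rfl
  clear_value s m
  -- the eigenvector matrix
  set P : Matrix (Fin 4) (Fin 4) ℂ :=
    !![-(f:ℂ)*g, 1, s + g - 1, -s + g - 1;
       (g:ℂ)*g, 1, (g:ℂ), (g:ℂ);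
       (f:ℂ)*g, -1, s + f - 1, -s + f - 1;
       -(f:ℂ)*f, -1, (f:ℂ), (f:ℂ)] with hP
  have hdet : P.det = -2 * m ^ 3 * s := by
    rw [hm]
    rw [Matrix.det_succ_row_zero]
    simp [hP, Fin.sum_univ_succ, Matrix.det_fin_three, Fin.succAbove]
    ring
  have hdet0 : IsUnit P.det := by
    rw [hdet]
    exact isUnit_iff_ne_zero.mpr (by
      exact mul_ne_zero (mul_ne_zero (by norm_num) (pow_ne_zero _ hm0)) hs0)
  have hPu : IsUnit P := (Matrix.isUnit_iff_isUnit_det P).mpr hdet0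
  have hD : D = !![1,0,0,0; 0,1-m,0,0; 0,0,s,0; 0,0,0,-s] := by
    ext i j
    fin_cases i <;> fin_cases j <;>
      norm_num [D, Matrix.diagonal_apply, Fin.ext_iff, Matrix.vecHead, Matrix.vecTail]
  have hMP : M * P = P * D := by
    rw [hD]
    ext i j
    fin_cases i <;> fin_cases j <;>
      simp [hP, M, Mmat, Matrix.mul_apply, Fin.sum_univ_four,
        Matrix.vecHead, Matrix.vecTail] <;>
      (first | (rw [hm]; ring1) | ring1 | linear_combination -hs2 + hm)
  have hPPinv : P * P⁻¹ = 1 := Matrix.mul_nonsing_inv P hdet0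
  have hPinvP : P⁻¹ * P = 1 := Matrix.nonsing_inv_mul P hdet0
  have hMeq : M = P * D * P⁻¹ := by
    calc M = M * (P * P⁻¹) := by rw [hPPinv, mul_one]
    _ = (M * P) * P⁻¹ := by rw [mul_assoc]
    _ = P * D * P⁻¹ := by rw [hMP]
  refine ⟨⟨P, hPu, hMeq⟩, ?_⟩
  intro v₀
  set c : Fin 4 → ℂ := P⁻¹.mulVec v₀ with hc
  -- eigenvector columns
  have hcol : ∀ j : Fin 4, M.mulVec (fun i => P i j) = (![1, 1 - m, s, -s] j) • (fun i => P i j) := by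
    intro j
    funext i
    have := congrFun (congrFun hMP i) j
    simp only [Matrix.mul_apply, Matrix.diagonal, D] at this
    simp only [Matrix.mulVec, dotProduct]
    rw [show ∑ x, M i x * P x j = ∑ x, P i x * D x j from this]
    simp [D, Matrix.diagonal_apply, Fin.sum_univ_four]
    fin_cases j <;> simp <;> ring
  set x₁ : Fin 4 → ℂ := c 0 • (fun i => P i 0) with hx1
  set x₂ : Fin 4 → ℂ := c 2 • (fun i => P i 2) with hx2
  set x₃ : Fin 4 → ℂ := c 3 • (fun i => P i 3) with hx3
  set x₄ : Fin 4 → ℂ := c 1 • (fun i => P i 1) with hx4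
  have e1 : M.mulVec x₁ = x₁ := by
    rw [hx1, Matrix.mulVec_smul, hcol 0]; simp
  have e2 : M.mulVec x₂ = s • x₂ := by
    rw [hx2, Matrix.mulVec_smul, hcol 2]
    simp [smul_smul, mul_comm]
  have e3 : M.mulVec x₃ = (-s) • x₃ := by
    rw [hx3, Matrix.mulVec_smul, hcol 3]
    simp [smul_smul, mul_comm]
  have e4 : M.mulVec x₄ = (1 - m) • x₄ := by
    rw [hx4, Matrix.mulVec_smul, hcol 1]
    simp [smul_smul, mul_comm]
  have hsum : v₀ = x₁ + x₂ + x₃ + x₄ := by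
    have : P.mulVec c = v₀ := by
      rw [hc, Matrix.mulVec_mulVec, hPPinv, Matrix.one_mulVec]
    rw [← this]
    funext i
    simp [Matrix.mulVec, dotProduct, Fin.sum_univ_four, hx1, hx2, hx3, hx4]
    ring
  refine ⟨x₁, x₂, x₃, x₄, e1, e2, e3, e4, hsum, ?_⟩
  intro ℓ
  induction ℓ with
  | zero => simpa [Matrix.one_mulVec] using hsum
  | succ n ih =>
    have : M ^ (n + 1) = M * M ^ n := by rw [pow_succ']
    rw [this, ← Matrix.mulVec_mulVec, ih]
    simp only [Matrix.mulVec_add, Matrix.mulVec_smul, e1, e2, e3, e4, smul_smul]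
    first
      | rfl
      | (funext i
         simp only [Pi.add_apply, Pi.smul_apply, smul_eq_mul, pow_succ]
         ring1)
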